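/- For any functions d, e : X × X → [0,∞] and all subsets Y,Z ⊆ X, the reverse-Hausdorff composition satisfies (d^H ∘ e^H)(Y,Z) = (d^H ∘ e_H)(Y,Z), where the compositions take infima over intermediate subsets W ⊆ X, d^H(Y,Z) = inf_{z∈Z} sup_{y∈Y} d(y,z) and d_H(Y,Z) = sup_{y∈Y} inf_{z∈Z} d(y,z). -/

import Mathlib

open ENNReal Filter Set

/-- `d^H ∘ e^H = d^H ∘ e_H`, where compositions take infima over intermediate subsets. -/
theorem revHausdorff_comp {X : Type*} (d e : X → X → ℝ≥0∞) (Y Z : Set X) :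
    (⨅ W : Set X, (⨅ w ∈ W, ⨆ y ∈ Y, d y w) + (⨅ z ∈ Z, ⨆ w ∈ W, e w z)) =
    (⨅ W : Set X, (⨅ w ∈ W, ⨆ y ∈ Y, d y w) + (⨆ w ∈ W, ⨅ z ∈ Z, e w z)) := by
  refine le_antisymm (le_iInf fun W => ?_) (le_iInf fun W => iInf_le_of_le W ?_)
  case refine_2 =>
    gcongr
    exact iSup₂_le fun w hw => le_iInf₂ fun z hz => (iInf₂_le z hz).trans (le_iSup₂ (f := fun w (_ : w ∈ W) => e w z) w hw)
  have key : (⨅ W : Set X, (⨅ w ∈ W, ⨆ y ∈ Y, d y w) + (⨅ z ∈ Z, ⨆ w ∈ W, e w z)) ≤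
      ⨅ w ∈ W, ((⨆ y ∈ Y, d y w) + ⨅ z ∈ Z, e w z) :=
    le_iInf₂ fun w _ => iInf_le_of_le {w} (by simp)
  refine key.trans ?_
  rw [iInf_subtype', iInf_subtype', ENNReal.iInf_add]
  exact iInf_mono fun w => add_le_add_right
    (le_iSup₂ (f := fun w (_ : w ∈ W) => ⨅ z ∈ Z, e w z) w.1 w.2) _
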